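/- Let Σ be a positive semidefinite real p×p matrix, and for x ∈ ℝᵖ write ‖x‖_Σ² = xᵀΣx. Let d, λ > 0 and θ, ξ ∈ ℝᵖ, and let η ∈ ℝᵖ satisfy the optimality inequality (1/(2d))‖η − (θ+ξ)‖_Σ² + λ‖η‖₁ ≤ (1/(2d))‖ξ‖_Σ² + λ‖θ‖₁ (which holds in particular when η minimizes t ↦ (1/(2d))‖t − (θ+ξ)‖_Σ² + λ‖t‖₁ over ℝᵖ). Then ‖η − θ‖_Σ² ≤ max(4dλ‖θ‖₁, 16‖ξ‖_Σ²). -/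

import Mathlib

open Matrix

/-- Deterministic proximal-operator bound from the appendix (bound on τ in
Theorem 1): if `η` satisfies the optimality inequality of the Σ-proximal lasso
objective, then `‖η − θ‖_Σ² ≤ max(4dλ‖θ‖₁, 16‖ξ‖_Σ²)`. -/
theorem stmt12 {p : ℕ} (Sigma : Matrix (Fin p) (Fin p) ℝ) (hSigma : Sigma.PosSemidef)
    (d lam : ℝ) (hd : 0 < d) (hlam : 0 < lam)
    (θ ξ η : Fin p → ℝ)
    (hopt : (1 / (2 * d)) * ((η - (θ + ξ)) ⬝ᵥ (Sigma *ᵥ (η - (θ + ξ)))) + lam * ∑ j, |η j| ≤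
        (1 / (2 * d)) * (ξ ⬝ᵥ (Sigma *ᵥ ξ)) + lam * ∑ j, |θ j|) :
    (η - θ) ⬝ᵥ (Sigma *ᵥ (η - θ)) ≤
      max (4 * d * lam * ∑ j, |θ j|) (16 * (ξ ⬝ᵥ (Sigma *ᵥ ξ))) := by
  have htr : Sigmaᵀ = Sigma := by
    exact IsSymm.eq (by simpa using hSigma.isHermitian)
  have hsym : ∀ v w : Fin p → ℝ, v ⬝ᵥ (Sigma *ᵥ w) = w ⬝ᵥ (Sigma *ᵥ v) := by
    intro v w
    rw [dotProduct_mulVec, ← mulVec_transpose, htr, dotProduct_comm]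
  set u := η - θ with hu
  set A := u ⬝ᵥ (Sigma *ᵥ u) with hA
  set B := ξ ⬝ᵥ (Sigma *ᵥ ξ) with hB
  set s := u ⬝ᵥ (Sigma *ᵥ ξ) with hs
  have hAnn : 0 ≤ A := hSigma.dotProduct_mulVec_nonneg u
  have hBnn : 0 ≤ B := hSigma.dotProduct_mulVec_nonneg ξ
  have hexp : (η - (θ + ξ)) ⬝ᵥ (Sigma *ᵥ (η - (θ + ξ))) = A - 2 * s + B := by
    have h1 : η - (θ + ξ) = u - ξ := by funext i; simp [hu]; ring
    rw [h1, hA, hs, hB]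
    simp only [sub_dotProduct, dotProduct_sub, mulVec_sub]
    linarith [hsym ξ u]
  have hCS : s ^ 2 ≤ A * B := by
    have h := discrim_le_zero (a := B) (b := 2 * s) (c := A) ?_
    · simp only [discrim] at h; nlinarith
    · intro x
      have hexp2 : (u + x • ξ) ⬝ᵥ (Sigma *ᵥ (u + x • ξ)) = B * x ^ 2 + 2 * s * x + A := by
        rw [hB, hs, hA]
        simp only [add_dotProduct, dotProduct_add, mulVec_add, mulVec_smul, smul_dotProduct,
          dotProduct_smul, smul_eq_mul]
        linear_combination x * hsym ξ u
      have h0 := hSigma.dotProduct_mulVec_nonneg (u + x • ξ)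
      rw [star_trivial, hexp2] at h0
      nlinarith [h0]
  have hηnn : (0:ℝ) ≤ ∑ j, |η j| := Finset.sum_nonneg fun j _ => abs_nonneg _
  have hθnn : (0:ℝ) ≤ ∑ j, |θ j| := Finset.sum_nonneg fun j _ => abs_nonneg _
  have hkey : A ≤ 2 * s + 2 * d * lam * ∑ j, |θ j| := by
    rw [hexp] at hopt
    have h2d : (0:ℝ) < 2 * d := by linarith
    have e : 2 * d * (1 / (2 * d)) = 1 := by field_simp
    have hdist : (1 / (2 * d)) * (A - 2 * s + B) =
        (1 / (2 * d)) * (A - 2 * s) + (1 / (2 * d)) * B := by ring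
    rw [hdist] at hopt
    have h1 : (1 / (2 * d)) * (A - 2 * s) ≤ lam * ∑ j, |θ j| := by
      linarith [mul_nonneg hlam.le hηnn]
    have h2 := mul_le_mul_of_nonneg_left h1 h2d.le
    rw [← mul_assoc, e, one_mul] at h2
    linarith [h2]
  rcases le_or_gt A (16 * B) with h | h
  · exact le_max_of_le_right h
  · refine le_max_of_le_left ?_
    nlinarith [sq_nonneg (A - 4 * s), mul_nonneg hAnn hBnn]
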